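/- Let x be a flow in batch equilibrium of a batch system (N_e)_{e∈E} for a congestion game with non-negative, non-decreasing, continuously differentiable, convex latencies l_e, and let OPT denote the minimum of the social cost C(y) = ∑_e l_e(y_e)·y_e over all feasible flows. Then for every ε > 0 there is a choice of batch counts (N_e) such that the batch-system social cost Ĉ(x) = ∑_e (x_e/N_e) ∑_{b=1}^{N_e} l̂_e((b/N_e)·x_e) satisfies OPT ≤ Ĉ(x) ≤ OPT + ε. -/

import Mathlib

private noncomputable def lhat (l : ℝ → ℝ) (z : ℝ) : ℝ := l z + z * deriv l z

private lemma hasDerivAt_zmul {l : ℝ → ℝ} {z : ℝ} (h : DifferentiableAt ℝ l z) :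
    HasDerivAt (fun z => z * l z) (lhat l z) z := by
  have := (hasDerivAt_id z).mul h.hasDerivAt
  simpa [lhat, add_comm, Pi.mul_def] using this

private lemma Fconvex {l : ℝ → ℝ} (h0 : ∀ z ∈ Set.Ici (0:ℝ), 0 ≤ l z)
    (hm : MonotoneOn l (Set.Ici (0:ℝ))) (hc : ConvexOn ℝ (Set.Ici (0:ℝ)) l) :
    ConvexOn ℝ (Set.Ici (0:ℝ)) (fun z => z * l z) := by
  have h := (convexOn_id (convex_Ici (0:ℝ))).mul hc (fun x hx => hx) h0 ?_
  · exact h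
  · intro i hi j hj hij
    by_contra h'
    exact absurd (hm hj hi (le_of_not_ge h')) (not_le.2 hij)

private lemma grad_ineq {F : ℝ → ℝ} (hF : ConvexOn ℝ (Set.Ici (0:ℝ)) F) {x y : ℝ}
    (hx : (0:ℝ) ≤ x) (hy : (0:ℝ) ≤ y) (hd : DifferentiableAt ℝ F x) :
    F x + deriv F x * (y - x) ≤ F y := by
  rcases lt_trichotomy x y with h | rfl | h
  · have h1 := hF.deriv_le_slope hx hy h hd
    rw [slope_def_field, le_div_iff₀ (by linarith)] at h1
    nlinarith
  · simp
  · have h1 := hF.slope_le_deriv hy hx h hd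
    rw [slope_def_field, div_le_iff₀ (by linarith)] at h1
    nlinarith

private lemma lhat_mono {l : ℝ → ℝ} (h0 : ∀ z ∈ Set.Ici (0:ℝ), 0 ≤ l z)
    (hm : MonotoneOn l (Set.Ici (0:ℝ)))
    (hd : ∀ z ∈ Set.Ici (0:ℝ), DifferentiableAt ℝ l z)
    (hc : ConvexOn ℝ (Set.Ici (0:ℝ)) l)
    {a b : ℝ} (ha : 0 ≤ a) (hab : a ≤ b) : lhat l a ≤ lhat l b := by
  have hb : (0:ℝ) ≤ b := le_trans ha hab
  have h1 := (Fconvex h0 hm hc).monotoneOn_deriv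
    (fun z hz => (hasDerivAt_zmul (hd z hz)).differentiableAt) ha hb hab
  rwa [(hasDerivAt_zmul (hd a ha)).deriv, (hasDerivAt_zmul (hd b hb)).deriv] at h1

private lemma lhat_nonneg {l : ℝ → ℝ} (h0 : ∀ z ∈ Set.Ici (0:ℝ), 0 ≤ l z)
    (hm : MonotoneOn l (Set.Ici (0:ℝ)))
    (hd : ∀ z ∈ Set.Ici (0:ℝ), DifferentiableAt ℝ l z)
    (hc : ConvexOn ℝ (Set.Ici (0:ℝ)) l)
    {a : ℝ} (ha : 0 ≤ a) : 0 ≤ lhat l a := by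
  have := lhat_mono h0 hm hd hc le_rfl ha
  have h00 : lhat l 0 = l 0 := by simp [lhat]
  have := h0 0 (by norm_num)
  linarith

/-- gradient inequality specialized -/
private lemma zl_grad {l : ℝ → ℝ} (h0 : ∀ z ∈ Set.Ici (0:ℝ), 0 ≤ l z)
    (hm : MonotoneOn l (Set.Ici (0:ℝ)))
    (hd : ∀ z ∈ Set.Ici (0:ℝ), DifferentiableAt ℝ l z)
    (hc : ConvexOn ℝ (Set.Ici (0:ℝ)) l)
    {x y : ℝ} (hx : 0 ≤ x) (hy : 0 ≤ y) :
    x * l x + lhat l x * (y - x) ≤ y * l y := by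
  have := grad_ineq (Fconvex h0 hm hc) hx hy (hasDerivAt_zmul (hd x hx)).differentiableAt
  rwa [(hasDerivAt_zmul (hd x hx)).deriv] at this

private lemma riemann {l : ℝ → ℝ}
    (h0 : ∀ z ∈ Set.Ici (0:ℝ), 0 ≤ l z)
    (hm : MonotoneOn l (Set.Ici (0:ℝ)))
    (hd : ∀ z ∈ Set.Ici (0:ℝ), DifferentiableAt ℝ l z)
    (hc : ConvexOn ℝ (Set.Ici (0:ℝ)) l)
    {x : ℝ} (hx : 0 ≤ x) {N : ℕ} (hN : 1 ≤ N) :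
    x * l x ≤ (x / N) * ∑ b ∈ Finset.Icc 1 N, lhat l (((b:ℝ) / (N:ℝ)) * x)
    ∧ (x / N) * ∑ b ∈ Finset.Icc 1 N, lhat l (((b:ℝ) / (N:ℝ)) * x)
      ≤ x * l x + (x / N) * lhat l x := by
  have hNpos : (0:ℝ) < N := by exact_mod_cast Nat.lt_of_lt_of_le Nat.zero_lt_one hN
  rcases eq_or_lt_of_le hx with rfl | hxpos
  · constructor <;> simp
  set F : ℝ → ℝ := fun z => z * l z with hF
  set p : ℕ → ℝ := fun b => ((b:ℝ) / (N:ℝ)) * x with hp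
  have hpmem : ∀ b : ℕ, 0 ≤ p b := fun b => by
    have : (0:ℝ) ≤ (b:ℝ) / N := div_nonneg (Nat.cast_nonneg b) hNpos.le
    exact mul_nonneg this hx
  have hstep : ∀ b : ℕ, p (b + 1) - p b = x / N := by
    intro b
    simp only [hp]
    push_cast
    field_simp
    ring
  have hxN : 0 < x / N := div_pos hxpos hNpos
  have hlt : ∀ b : ℕ, p b < p (b + 1) := fun b => by
    have := hstep b; linarith
  have claim : ∀ b : ℕ,
      (x / N) * lhat l (p b) ≤ F (p (b+1)) - F (p b) ∧
      F (p (b+1)) - F (p b) ≤ (x / N) * lhat l (p (b+1)) := by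
    intro b
    have hsub : Set.Icc (p b) (p (b+1)) ⊆ Set.Ici (0:ℝ) := fun y hy =>
      le_trans (hpmem b) hy.1
    obtain ⟨c, hcmem, hceq⟩ := exists_hasDerivAt_eq_slope F (lhat l) (hlt b)
      (fun y hy => ((hasDerivAt_zmul (hd y (hsub hy))).differentiableAt).continuousAt.continuousWithinAt)
      (fun y hy => hasDerivAt_zmul (hd y (hsub (Set.Ioo_subset_Icc_self hy))))
    have hc0 : (0:ℝ) ≤ c := le_trans (hpmem b) hcmem.1.le
    have hdiffeq : F (p (b+1)) - F (p b) = lhat l c * (x / N) := by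
      rw [hceq, hstep b]
      field_simp
    have h1 : lhat l (p b) ≤ lhat l c := lhat_mono h0 hm hd hc (hpmem b) hcmem.1.le
    have h2 : lhat l c ≤ lhat l (p (b+1)) := lhat_mono h0 hm hd hc hc0 hcmem.2.le
    constructor
    · rw [hdiffeq]
      nlinarith
    · rw [hdiffeq]
      nlinarith
  have tel : ∑ b ∈ Finset.range N, (F (p (b+1)) - F (p b)) = x * l x := by
    rw [Finset.sum_range_sub (fun b => F (p b))]
    have hpN : p N = x := by
      simp only [hp]
      rw [div_self hNpos.ne', one_mul]
    have hp0 : p 0 = 0 := by simp [hp]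
    rw [hpN, hp0]
    simp [hF]
  have hIcc : ∑ b ∈ Finset.Icc 1 N, lhat l (((b:ℝ) / (N:ℝ)) * x)
      = ∑ b ∈ Finset.range N, lhat l (p (b+1)) := by
    rw [← Finset.Ico_add_one_right_eq_Icc, Finset.sum_Ico_eq_sum_range]
    simp only [Nat.succ_sub_one, Nat.add_sub_cancel]
    exact Finset.sum_congr rfl fun b _ => by rw [add_comm]
  have hshift : ∑ b ∈ Finset.range N, lhat l (p (b+1))
      = ∑ b ∈ Finset.range N, lhat l (p b) + (lhat l (p N) - lhat l (p 0)) := by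
    have := Finset.sum_range_sub (fun b => lhat l (p b)) N
    have h2 : ∑ b ∈ Finset.range N, (lhat l (p (b+1)) - lhat l (p b))
        = ∑ b ∈ Finset.range N, lhat l (p (b+1)) - ∑ b ∈ Finset.range N, lhat l (p b) :=
      Finset.sum_sub_distrib _ _
    linarith [this, h2]
  have hpN : p N = x := by
    simp only [hp]; rw [div_self hNpos.ne', one_mul]
  have hp0 : p 0 = 0 := by simp [hp]
  have hl00 : 0 ≤ lhat l (p 0) := by rw [hp0]; exact lhat_nonneg h0 hm hd hc le_rfl
  constructor
  · have := Finset.sum_le_sum (fun b (_ : b ∈ Finset.range N) => (claim b).2)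
    rw [tel] at this
    rw [hIcc, Finset.mul_sum]
    calc x * l x ≤ ∑ b ∈ Finset.range N, (x / N) * lhat l (p (b+1)) := this
      _ = ∑ b ∈ Finset.range N, x / ↑N * lhat l (p (b + 1)) := rfl
  · have hlow := Finset.sum_le_sum (fun b (_ : b ∈ Finset.range N) => (claim b).1)
    rw [tel] at hlow
    rw [hIcc, hshift, hpN, hp0]
    rw [mul_add, Finset.mul_sum]
    have : (x / N) * (lhat l x - lhat l 0) ≤ (x / N) * lhat l x := by
      have h0' : 0 ≤ lhat l 0 := lhat_nonneg h0 hm hd hc le_rfl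
      nlinarith
    linarith

private lemma sum_swap_flow {E ι : Type*} [Fintype E] [Fintype ι] [DecidableEq E]
    (𝒮 : ι → Finset (Finset E)) (w : E → ℝ) (g : ι → Finset E → ℝ) :
    ∑ e : E, w e * (∑ i, ∑ S ∈ (𝒮 i).filter (fun S => e ∈ S), g i S)
      = ∑ i, ∑ S ∈ 𝒮 i, (∑ e ∈ S, w e) * g i S := by
  simp_rw [Finset.mul_sum, Finset.sum_filter]
  rw [Finset.sum_comm]
  refine Finset.sum_congr rfl fun i _ => ?_
  rw [Finset.sum_comm]
  refine Finset.sum_congr rfl fun S _ => ?_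
  rw [Finset.sum_mul]
  simp [Finset.sum_ite_mem, Finset.univ_inter]

/-- Theorem 1: for latencies `l_e` non-negative, non-decreasing, continuously
differentiable and convex, with `OPT` the minimum social cost over feasible flows,
for every `ε > 0` there is a choice of batch counts `(N_e)` such that any feasible flow
in batch equilibrium has batch-system social cost
`Ĉ(x) = ∑_e (x_e/N_e) ∑_{b=1}^{N_e} l̂_e((b/N_e)·x_e)` with `OPT ≤ Ĉ(x) ≤ OPT + ε`,
where `l̂_e(z) = l_e(z) + z·l_e'(z)`. -/
theorem batch_equilibrium_near_optimal {E ι : Type*} [Fintype E] [Fintype ι] [DecidableEq E]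
    (l : E → ℝ → ℝ)
    (hnonneg : ∀ e, ∀ z ∈ Set.Ici (0:ℝ), 0 ≤ l e z)
    (hmono : ∀ e, MonotoneOn (l e) (Set.Ici (0:ℝ)))
    (hdiff : ∀ e, ∀ z ∈ Set.Ici (0:ℝ), DifferentiableAt ℝ (l e) z)
    (hcont : ∀ e, ContinuousOn (deriv (l e)) (Set.Ici (0:ℝ)))
    (hconv : ∀ e, ConvexOn ℝ (Set.Ici (0:ℝ)) (l e))
    (𝒮 : ι → Finset (Finset E)) (d : ι → ℝ) (hd : ∀ i, 0 ≤ d i)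
    (flow : (ι → Finset E → ℝ) → E → ℝ)
    (hflow : ∀ g e, flow g e = ∑ i, ∑ S ∈ (𝒮 i).filter (fun S => e ∈ S), g i S)
    (feasible : (ι → Finset E → ℝ) → Prop)
    (hfeas : ∀ g, feasible g ↔ (∀ i S, 0 ≤ g i S) ∧ ∀ i, ∑ S ∈ 𝒮 i, g i S = d i)
    (OPT : ℝ)
    (hOPT : IsLeast ((fun g => ∑ e : E, l e (flow g e) * flow g e) '' {g | feasible g}) OPT)
    (ε : ℝ) (hε : 0 < ε) :
    ∃ N : E → ℕ, (∀ e, 1 ≤ N e) ∧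
      ∀ f, feasible f →
        -- f is in batch equilibrium w.r.t. the batch system N
        (∀ i : ι, ∀ S₁ ∈ 𝒮 i, ∀ S₂ ∈ 𝒮 i, 0 < f i S₁ →
          ∀ b : E → ℕ, (∀ e, 1 ≤ b e ∧ b e ≤ N e) →
            ∑ e ∈ S₁,
                (l e ((b e / N e : ℝ) * flow f e) +
                  ((b e / N e : ℝ) * flow f e) * deriv (l e) ((b e / N e : ℝ) * flow f e)) ≤
              ∑ e ∈ S₂, (l e (flow f e) + flow f e * deriv (l e) (flow f e))) →
        OPT ≤ (∑ e : E, (flow f e / N e) * ∑ b ∈ Finset.Icc 1 (N e),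
                (l e ((b / N e : ℝ) * flow f e) +
                  ((b / N e : ℝ) * flow f e) * deriv (l e) ((b / N e : ℝ) * flow f e))) ∧
          (∑ e : E, (flow f e / N e) * ∑ b ∈ Finset.Icc 1 (N e),
                (l e ((b / N e : ℝ) * flow f e) +
                  ((b / N e : ℝ) * flow f e) * deriv (l e) ((b / N e : ℝ) * flow f e))) ≤
            OPT + ε := by
  classical
  set D := ∑ i, d i with hD
  have hD0 : 0 ≤ D := Finset.sum_nonneg fun i _ => hd i
  set K : E → ℝ := fun e => D * lhat (l e) D with hK
  set N : E → ℕ := fun e => Nat.ceil (K e * (Fintype.card E) / ε) + 1 with hNdef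
  have hN1 : ∀ e, 1 ≤ N e := fun e => Nat.le_add_left 1 _
  have hNpos : ∀ e, (0:ℝ) < (N e : ℝ) := fun e => by
    exact_mod_cast Nat.lt_of_lt_of_le Nat.zero_lt_one (hN1 e)
  refine ⟨N, hN1, ?_⟩
  intro f hfeasf heq
  obtain ⟨hf0, hfd⟩ := (hfeas f).1 hfeasf
  have hx0 : ∀ e, 0 ≤ flow f e := by
    intro e; rw [hflow]
    exact Finset.sum_nonneg fun i _ => Finset.sum_nonneg fun S _ => hf0 i S
  have hxD : ∀ e, flow f e ≤ D := by
    intro e; rw [hflow, hD]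
    refine Finset.sum_le_sum fun i _ => ?_
    calc ∑ S ∈ (𝒮 i).filter (fun S => e ∈ S), f i S ≤ ∑ S ∈ 𝒮 i, f i S :=
          Finset.sum_le_sum_of_subset_of_nonneg (Finset.filter_subset _ _)
            (fun S hS _ => hf0 i S)
      _ = d i := hfd i
  -- rewrite goal sums via lhat
  have hgoal_eq : (∑ e : E, (flow f e / N e) * ∑ b ∈ Finset.Icc 1 (N e),
        (l e ((b / N e : ℝ) * flow f e) +
          ((b / N e : ℝ) * flow f e) * deriv (l e) ((b / N e : ℝ) * flow f e)))
      = ∑ e : E, (flow f e / N e) * ∑ b ∈ Finset.Icc 1 (N e),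
          lhat (l e) (((b:ℝ) / (N e : ℝ)) * flow f e) := by
    simp only [lhat]
  rw [hgoal_eq]
  have hrie := fun e => riemann (hnonneg e) (hmono e) (hdiff e) (hconv e) (hx0 e) (hN1 e)
  -- lower bound
  have hOPTle : OPT ≤ ∑ e : E, flow f e * l e (flow f e) := by
    have := hOPT.2 ⟨f, hfeasf, rfl⟩
    simpa [mul_comm] using this
  have hlower : ∑ e : E, flow f e * l e (flow f e)
      ≤ ∑ e : E, (flow f e / N e) * ∑ b ∈ Finset.Icc 1 (N e),
          lhat (l e) (((b:ℝ) / (N e : ℝ)) * flow f e) :=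
    Finset.sum_le_sum fun e _ => (hrie e).1
  -- upper bound building blocks
  obtain ⟨g₀, hg₀feas, hg₀val⟩ := hOPT.1
  obtain ⟨hg0, hgd⟩ := (hfeas g₀).1 hg₀feas
  have hy0 : ∀ e, 0 ≤ flow g₀ e := by
    intro e; rw [hflow]
    exact Finset.sum_nonneg fun i _ => Finset.sum_nonneg fun S _ => hg0 i S
  -- variational inequality
  set w : E → ℝ := fun e => lhat (l e) (flow f e) with hw
  set c : Finset E → ℝ := fun S => ∑ e ∈ S, w e with hcdef
  have hswap : ∀ g : ι → Finset E → ℝ,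
      ∑ e : E, w e * flow g e = ∑ i, ∑ S ∈ 𝒮 i, c S * g i S := by
    intro g
    simp_rw [hflow]
    exact sum_swap_flow 𝒮 w g
  have hVIi : ∀ i, ∑ S ∈ 𝒮 i, c S * f i S ≤ ∑ S ∈ 𝒮 i, c S * g₀ i S := by
    intro i
    rcases (𝒮 i).eq_empty_or_nonempty with hemp | hne
    · simp [hemp]
    obtain ⟨Sm, hSm, hSmin⟩ := Finset.exists_min_image (𝒮 i) c hne
    have hsimp : ∀ e : E, ((N e : ℝ) / (N e : ℝ)) = 1 := fun e => div_self (hNpos e).ne'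
    have hstep1 : ∀ S ∈ 𝒮 i, c S * f i S ≤ c Sm * f i S := by
      intro S hS
      rcases eq_or_lt_of_le (hf0 i S) with h | h
      · rw [← h]; simp
      · have hkey := heq i S hS Sm hSm h N (fun e => ⟨hN1 e, le_rfl⟩)
        simp only [hsimp, one_mul] at hkey
        have hcle : c S ≤ c Sm := by
          simpa only [hcdef, hw, lhat] using hkey
        exact mul_le_mul_of_nonneg_right hcle h.le
    calc ∑ S ∈ 𝒮 i, c S * f i S ≤ ∑ S ∈ 𝒮 i, c Sm * f i S :=
          Finset.sum_le_sum hstep1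
      _ = c Sm * d i := by rw [← Finset.mul_sum, hfd i]
      _ = c Sm * ∑ S ∈ 𝒮 i, g₀ i S := by rw [hgd i]
      _ = ∑ S ∈ 𝒮 i, c Sm * g₀ i S := by rw [Finset.mul_sum]
      _ ≤ ∑ S ∈ 𝒮 i, c S * g₀ i S :=
          Finset.sum_le_sum fun S hS =>
            mul_le_mul_of_nonneg_right (hSmin S hS) (hg0 i S)
  have hVI : ∑ e : E, w e * flow f e ≤ ∑ e : E, w e * flow g₀ e := by
    rw [hswap f, hswap g₀]
    exact Finset.sum_le_sum fun i _ => hVIi i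
  -- gradient inequality summed
  have hgrad : ∀ e : E, flow f e * l e (flow f e) + w e * (flow g₀ e - flow f e)
      ≤ flow g₀ e * l e (flow g₀ e) := fun e =>
    zl_grad (hnonneg e) (hmono e) (hdiff e) (hconv e) (hx0 e) (hy0 e)
  have hCfleOPT : ∑ e : E, flow f e * l e (flow f e) ≤ OPT := by
    have hsum := Finset.sum_le_sum fun e (_ : e ∈ Finset.univ) => hgrad e
    rw [Finset.sum_add_distrib] at hsum
    have hexp : ∑ e : E, w e * (flow g₀ e - flow f e)
        = ∑ e : E, w e * flow g₀ e - ∑ e : E, w e * flow f e := by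
      simp_rw [mul_sub]
      exact Finset.sum_sub_distrib _ _
    rw [hexp] at hsum
    have hOPTg : ∑ e : E, flow g₀ e * l e (flow g₀ e) = OPT := by
      rw [← hg₀val]; exact Finset.sum_congr rfl fun e _ => mul_comm _ _
    linarith [hVI, hsum, hOPTg.le, hOPTg.ge]
  -- error bound
  have herr : ∑ e : E, (flow f e / N e) * w e ≤ ε := by
    by_cases hE : IsEmpty E
    · simp [Finset.univ_eq_empty]
      exact hε.le
    have hcard : 0 < (Fintype.card E : ℝ) := by
      rw [not_isEmpty_iff] at hE
      exact_mod_cast Fintype.card_pos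
    have hterm : ∀ e : E, (flow f e / N e) * w e ≤ ε / (Fintype.card E : ℝ) := by
      intro e
      have hlx0 : 0 ≤ w e := lhat_nonneg (hnonneg e) (hmono e) (hdiff e) (hconv e) (hx0 e)
      have hlxD : w e ≤ lhat (l e) D :=
        lhat_mono (hnonneg e) (hmono e) (hdiff e) (hconv e) (hx0 e) (hxD e)
      have hxlx : flow f e * w e ≤ K e := by
        rw [hK]
        exact mul_le_mul (hxD e) hlxD hlx0 hD0
      have hNge : K e * (Fintype.card E : ℝ) / ε ≤ (N e : ℝ) := by
        rw [hNdef]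
        push_cast
        have := Nat.le_ceil (K e * (Fintype.card E : ℝ) / ε)
        linarith
      have hKcard : K e * (Fintype.card E : ℝ) ≤ (N e : ℝ) * ε := by
        rw [div_le_iff₀ hε] at hNge
        linarith
      calc (flow f e / N e) * w e = flow f e * w e / (N e : ℝ) := by ring
        _ ≤ K e / (N e : ℝ) := by
            exact (div_le_div_iff_of_pos_right (hNpos e)).2 hxlx
        _ ≤ ε / (Fintype.card E : ℝ) := by
            rw [div_le_div_iff₀ (hNpos e) hcard]
            linarith [hKcard]
    calc ∑ e : E, (flow f e / N e) * w e
        ≤ ∑ _e : E, ε / (Fintype.card E : ℝ) := Finset.sum_le_sum fun e _ => hterm e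
      _ = (Fintype.card E : ℝ) * (ε / (Fintype.card E : ℝ)) := by
          rw [Finset.sum_const, Finset.card_univ, nsmul_eq_mul]
      _ = ε := by field_simp
  -- conclude
  have hupper : ∑ e : E, (flow f e / N e) * ∑ b ∈ Finset.Icc 1 (N e),
        lhat (l e) (((b:ℝ) / (N e : ℝ)) * flow f e)
      ≤ ∑ e : E, flow f e * l e (flow f e) + ∑ e : E, (flow f e / N e) * w e := by
    rw [← Finset.sum_add_distrib]
    exact Finset.sum_le_sum fun e _ => (hrie e).2
  constructor
  · linarith
  · linarith
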